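/- (Riemann-sum sandwich for the idealised heat cost: Carnot–Landauer saturation.) Let d ≥ 1, ω : Fin d → ℝ, 0 ≤ β_H < β with β > 0, and set η := 1 − β_H/β. For q ≥ 0 define b(q) := β + q(β − β_H), p_k(q) := exp(−b(q) ω_k)/∑_j exp(−b(q) ω_j), the average energy x(q) := ∑_k ω_k p_k(q), the Shannon entropy S(q) := −∑_k p_k(q) log p_k(q), and the free energy F(q) := x(q) − S(q)/β. Then for every θ > 0 and every integer N ≥ 1: (1/η)(F(Nθ) − F(0)) ≤ ∑_{n=1}^{N} nθ (x((n−1)θ) − x(nθ)) ≤ (1/η)(F(Nθ) − F(0)) + θ (x(0) − x(Nθ)). -/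

import Mathlib

/-- Inverse temperature along the protocol: `b(q) = β + q(β − β_H)`. -/
noncomputable def bTemp (β βH q : ℝ) : ℝ := β + q * (β - βH)

/-- Gibbs populations `p_k(q) = exp(−b(q) ωₖ) / ∑ⱼ exp(−b(q) ωⱼ)`. -/
noncomputable def popQ (d : ℕ) (ω : Fin d → ℝ) (β βH q : ℝ) (k : Fin d) : ℝ :=
  Real.exp (-(bTemp β βH q) * ω k) / ∑ j, Real.exp (-(bTemp β βH q) * ω j)

/-- Average energy `x(q) = ∑ₖ ωₖ p_k(q)`. -/
noncomputable def avgE (d : ℕ) (ω : Fin d → ℝ) (β βH q : ℝ) : ℝ :=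
  ∑ k, ω k * popQ d ω β βH q k

/-- Shannon entropy `S(q) = −∑ₖ p_k(q) log p_k(q)`. -/
noncomputable def entQ (d : ℕ) (ω : Fin d → ℝ) (β βH q : ℝ) : ℝ :=
  -∑ k, popQ d ω β βH q k * Real.log (popQ d ω β βH q k)

/-- Free energy `F(q) = x(q) − S(q)/β` w.r.t. the cold inverse temperature `β`. -/
noncomputable def freeE (d : ℕ) (ω : Fin d → ℝ) (β βH q : ℝ) : ℝ :=
  avgE d ω β βH q - entQ d ω β βH q / β

noncomputable def Zq (d : ℕ) (ω : Fin d → ℝ) (β βH q : ℝ) : ℝ :=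
  ∑ j, Real.exp (-(bTemp β βH q) * ω j)

lemma Zq_pos (d : ℕ) (hd : 1 ≤ d) (ω : Fin d → ℝ) (β βH q : ℝ) :
    0 < Zq d ω β βH q := by
  have : Nonempty (Fin d) := Fin.pos_iff_nonempty.mp hd
  exact Finset.sum_pos (fun j _ => Real.exp_pos _) Finset.univ_nonempty

lemma popQ_nonneg (d : ℕ) (hd : 1 ≤ d) (ω : Fin d → ℝ) (β βH q : ℝ) (k : Fin d) :
    0 ≤ popQ d ω β βH q k :=
  div_nonneg (Real.exp_pos _).le (Zq_pos d hd ω β βH q).le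

lemma sum_popQ (d : ℕ) (hd : 1 ≤ d) (ω : Fin d → ℝ) (β βH q : ℝ) :
    ∑ k, popQ d ω β βH q k = 1 := by
  have hZ : (∑ j, Real.exp (-(bTemp β βH q) * ω j)) ≠ 0 := (Zq_pos d hd ω β βH q).ne'
  simp only [popQ, ← Finset.sum_div]
  exact div_self hZ

lemma logZ_tangent (d : ℕ) (hd : 1 ≤ d) (ω : Fin d → ℝ) (β βH q1 q2 : ℝ) :
    Real.log (Zq d ω β βH q1) - (bTemp β βH q2 - bTemp β βH q1) * avgE d ω β βH q1
      ≤ Real.log (Zq d ω β βH q2) := by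
  set δ := bTemp β βH q2 - bTemp β βH q1 with hδ
  have hZ1 := Zq_pos d hd ω β βH q1
  have key : Zq d ω β βH q2
      = Zq d ω β βH q1 * ∑ j, popQ d ω β βH q1 j * Real.exp (-δ * ω j) := by
    rw [Finset.mul_sum, Zq]
    refine Finset.sum_congr rfl fun j _ => ?_
    have hb : -(bTemp β βH q2) * ω j = -(bTemp β βH q1) * ω j + -δ * ω j := by
      rw [hδ]; ring
    have hZ1' : (∑ i, Real.exp (-(bTemp β βH q1) * ω i)) ≠ 0 := hZ1.ne'
    rw [hb, Real.exp_add, popQ]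
    simp only [Zq]
    field_simp
    have hZ'' : (∑ x, Real.exp (-(bTemp β βH q1 * ω x))) ≠ 0 := by
      simpa [neg_mul] using hZ1'
    exact (div_self hZ'').symm
  have jensen : Real.exp (∑ j, popQ d ω β βH q1 j * (-δ * ω j))
      ≤ ∑ j, popQ d ω β βH q1 j * Real.exp (-δ * ω j) := by
    have := convexOn_exp.map_sum_le (t := Finset.univ)
      (fun j _ => popQ_nonneg d hd ω β βH q1 j) (sum_popQ d hd ω β βH q1)
      (fun j _ => Set.mem_univ (-δ * ω j))
    simpa [smul_eq_mul] using this
  have hsum_pos : 0 < ∑ j, popQ d ω β βH q1 j * Real.exp (-δ * ω j) :=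
    lt_of_lt_of_le (Real.exp_pos _) jensen
  have havg : ∑ j, popQ d ω β βH q1 j * (-δ * ω j) = -δ * avgE d ω β βH q1 := by
    rw [avgE, Finset.mul_sum]; exact Finset.sum_congr rfl fun j _ => by ring
  have jensen' : Real.exp (-δ * avgE d ω β βH q1)
      ≤ ∑ j, popQ d ω β βH q1 j * Real.exp (-δ * ω j) := by rw [← havg]; exact jensen
  have hlog := Real.log_le_log (Real.exp_pos _) jensen'
  rw [Real.log_exp] at hlog
  rw [key, Real.log_mul hZ1.ne' hsum_pos.ne']
  linarith

lemma entQ_eq (d : ℕ) (hd : 1 ≤ d) (ω : Fin d → ℝ) (β βH q : ℝ) :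
    entQ d ω β βH q = bTemp β βH q * avgE d ω β βH q + Real.log (Zq d ω β βH q) := by
  have hZ := Zq_pos d hd ω β βH q
  have hlog : ∀ k, Real.log (popQ d ω β βH q k)
      = -(bTemp β βH q) * ω k - Real.log (Zq d ω β βH q) := fun k => by
    rw [popQ, show (∑ j, Real.exp (-(bTemp β βH q) * ω j)) = Zq d ω β βH q from rfl,
      Real.log_div (Real.exp_ne_zero _) hZ.ne', Real.log_exp]
  have hterm : ∀ k, popQ d ω β βH q k * Real.log (popQ d ω β βH q k)
      = -(bTemp β βH q) * (ω k * popQ d ω β βH q k)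
        - Real.log (Zq d ω β βH q) * popQ d ω β βH q k := fun k => by
    rw [hlog k]; ring
  rw [entQ]
  simp_rw [hterm]
  rw [Finset.sum_sub_distrib, ← Finset.mul_sum, ← Finset.mul_sum, ← avgE,
    sum_popQ d hd, mul_one]
  ring

lemma freeE_eq (d : ℕ) (hd : 1 ≤ d) (ω : Fin d → ℝ) (β βH q : ℝ) (hβ : β ≠ 0) :
    freeE d ω β βH q
      = -q * ((β - βH) / β) * avgE d ω β βH q - Real.log (Zq d ω β βH q) / β := by
  rw [freeE, entQ_eq d hd ω β βH q, bTemp]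
  field_simp
  ring

lemma key_low (d : ℕ) (hd : 1 ≤ d) (ω : Fin d → ℝ) (β βH : ℝ) (hβH : βH < β)
    (θ : ℝ) (i : ℕ) :
    (Real.log (Zq d ω β βH ((i : ℝ) * θ)) - Real.log (Zq d ω β βH (((i : ℝ) + 1) * θ)))
        / (β - βH)
      ≤ θ * avgE d ω β βH ((i : ℝ) * θ) := by
  have hc : 0 < β - βH := sub_pos.mpr hβH
  have ht := logZ_tangent d hd ω β βH ((i : ℝ) * θ) (((i : ℝ) + 1) * θ)
  have hb : bTemp β βH (((i : ℝ) + 1) * θ) - bTemp β βH ((i : ℝ) * θ) = θ * (β - βH) := by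
    simp only [bTemp]; ring
  rw [hb] at ht
  rw [div_le_iff₀ hc]
  have : θ * (β - βH) * avgE d ω β βH ((i : ℝ) * θ)
      = θ * avgE d ω β βH ((i : ℝ) * θ) * (β - βH) := by ring
  linarith

lemma key_high (d : ℕ) (hd : 1 ≤ d) (ω : Fin d → ℝ) (β βH : ℝ) (hβH : βH < β)
    (θ : ℝ) (i : ℕ) :
    θ * avgE d ω β βH (((i : ℝ) + 1) * θ)
      ≤ (Real.log (Zq d ω β βH ((i : ℝ) * θ)) - Real.log (Zq d ω β βH (((i : ℝ) + 1) * θ)))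
          / (β - βH) := by
  have hc : 0 < β - βH := sub_pos.mpr hβH
  have ht := logZ_tangent d hd ω β βH (((i : ℝ) + 1) * θ) ((i : ℝ) * θ)
  have hb : bTemp β βH ((i : ℝ) * θ) - bTemp β βH (((i : ℝ) + 1) * θ)
      = -(θ * (β - βH)) := by
    simp only [bTemp]; ring
  rw [hb] at ht
  rw [le_div_iff₀ hc]
  have : -(θ * (β - βH)) * avgE d ω β βH (((i : ℝ) + 1) * θ)
      = -(θ * avgE d ω β βH (((i : ℝ) + 1) * θ) * (β - βH)) := by ring
  linarith

lemma abel_sum (g : ℝ → ℝ) (θ : ℝ) (N : ℕ) :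
    ∑ n ∈ Finset.Icc 1 N, (n : ℝ) * θ * (g (((n : ℝ) - 1) * θ) - g ((n : ℝ) * θ))
      = -(N : ℝ) * θ * g ((N : ℝ) * θ) + ∑ i ∈ Finset.range N, θ * g ((i : ℝ) * θ) := by
  induction N with
  | zero => simp
  | succ m ih =>
      rw [Finset.sum_Icc_succ_top (by omega : 1 ≤ m + 1), ih, Finset.sum_range_succ]
      push_cast
      rw [show ((m : ℝ) + 1 - 1) * θ = (m : ℝ) * θ by ring]
      ring

/-- Riemann-sum sandwich for the idealised heat cost: Carnot–Landauer
saturation. -/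
theorem riemann_sandwich_carnot_landauer (d : ℕ) (hd : 1 ≤ d) (ω : Fin d → ℝ)
    (β βH : ℝ) (hβH0 : 0 ≤ βH) (hβH : βH < β) (hβ : 0 < β)
    (θ : ℝ) (hθ : 0 < θ) (N : ℕ) (hN : 1 ≤ N) :
    (1 / (1 - βH / β)) * (freeE d ω β βH (N * θ) - freeE d ω β βH 0)
      ≤ ∑ n ∈ Finset.Icc 1 N, (n : ℝ) * θ *
          (avgE d ω β βH (((n : ℝ) - 1) * θ) - avgE d ω β βH ((n : ℝ) * θ)) ∧
    ∑ n ∈ Finset.Icc 1 N, (n : ℝ) * θ *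
        (avgE d ω β βH (((n : ℝ) - 1) * θ) - avgE d ω β βH ((n : ℝ) * θ))
      ≤ (1 / (1 - βH / β)) * (freeE d ω β βH (N * θ) - freeE d ω β βH 0)
          + θ * (avgE d ω β βH 0 - avgE d ω β βH (N * θ)) := by
  have hβ0 : β ≠ 0 := hβ.ne'
  have hc : 0 < β - βH := sub_pos.mpr hβH
  -- telescoping identity for the log-partition differences
  have tele : ∑ i ∈ Finset.range N,
        (Real.log (Zq d ω β βH ((i : ℝ) * θ)) - Real.log (Zq d ω β βH (((i : ℝ) + 1) * θ)))
      = Real.log (Zq d ω β βH 0) - Real.log (Zq d ω β βH ((N : ℝ) * θ)) := by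
    have h := Finset.sum_range_sub' (fun i : ℕ => Real.log (Zq d ω β βH ((i : ℝ) * θ))) N
    simp only [Nat.cast_add, Nat.cast_one, Nat.cast_zero, zero_mul] at h
    exact h
  -- lower Riemann bound
  have sum_low : (Real.log (Zq d ω β βH 0) - Real.log (Zq d ω β βH ((N : ℝ) * θ))) / (β - βH)
      ≤ ∑ i ∈ Finset.range N, θ * avgE d ω β βH ((i : ℝ) * θ) := by
    rw [← tele, Finset.sum_div]
    exact Finset.sum_le_sum fun i _ => key_low d hd ω β βH hβH θ i
  -- upper Riemann bound
  have sum_high : ∑ i ∈ Finset.range N, θ * avgE d ω β βH (((i : ℝ) + 1) * θ)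
      ≤ (Real.log (Zq d ω β βH 0) - Real.log (Zq d ω β βH ((N : ℝ) * θ))) / (β - βH) := by
    rw [← tele, Finset.sum_div]
    exact Finset.sum_le_sum fun i _ => key_high d hd ω β βH hβH θ i
  -- index shift
  have shift : ∑ i ∈ Finset.range N, θ * avgE d ω β βH ((i : ℝ) * θ)
      = (∑ i ∈ Finset.range N, θ * avgE d ω β βH (((i : ℝ) + 1) * θ))
        + θ * avgE d ω β βH 0 - θ * avgE d ω β βH ((N : ℝ) * θ) := by
    have h1 := Finset.sum_range_succ' (fun i : ℕ => θ * avgE d ω β βH ((i : ℝ) * θ)) N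
    have h2 := Finset.sum_range_succ (fun i : ℕ => θ * avgE d ω β βH ((i : ℝ) * θ)) N
    simp only [Nat.cast_add, Nat.cast_one, Nat.cast_zero, zero_mul] at h1 h2
    linarith
  -- free-energy identity
  have hG : (1 / (1 - βH / β)) * (freeE d ω β βH (N * θ) - freeE d ω β βH 0)
      = -(N : ℝ) * θ * avgE d ω β βH ((N : ℝ) * θ)
        - (Real.log (Zq d ω β βH ((N : ℝ) * θ)) - Real.log (Zq d ω β βH 0)) / (β - βH) := by
    rw [freeE_eq d hd ω β βH ((N : ℝ) * θ) hβ0, freeE_eq d hd ω β βH 0 hβ0]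
    rw [show (1 : ℝ) - βH / β = (β - βH) / β by field_simp]
    field_simp
    ring
  have habel := abel_sum (avgE d ω β βH) θ N
  have hdivs : (Real.log (Zq d ω β βH 0) - Real.log (Zq d ω β βH ((N : ℝ) * θ))) / (β - βH)
      + (Real.log (Zq d ω β βH ((N : ℝ) * θ)) - Real.log (Zq d ω β βH 0)) / (β - βH) = 0 := by
    ring
  constructor
  · rw [habel, hG]; linarith
  · rw [habel, hG]; linarith
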